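/- Let N be a positive integer and let r with components r^{γε}_{αβ} ∈ ℂ (indices in {0,…,N−1}) be a skew-symmetric solution of the associative Yang–Baxter equation. On the polynomial ring ℂ[x_0, …, x_{N−1}] define the bracket {f, g} := Σ_{α,β,γ,ε} r^{γε}_{αβ} · x_γ · x_ε · (∂f/∂x_α) · (∂g/∂x_β). Then this bracket is skew-symmetric ({f,g} = −{g,f} for all polynomials f, g) and satisfies the Jacobi identity {f, {g, h}} + {g, {h, f}} + {h, {f, g}} = 0 for all polynomials f, g, h; in particular {x_α, x_β} = Σ_{γ,ε} r^{γε}_{αβ} x_γ x_ε defines a quadratic Poisson bracket. -/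

import Mathlib

open BigOperators Finset MvPolynomial

/-- A tensor `r` (with `r a b c d` denoting the component `r^{ab}_{cd}`) is a skew-symmetric
solution of the associative Yang–Baxter equation. -/
def IsAYBESolution (N : ℕ) (r : Fin N → Fin N → Fin N → Fin N → ℂ) : Prop :=
  (∀ γ ε α β : Fin N, r γ ε α β = - r ε γ β α) ∧
  (∀ α β τ lam mu nu : Fin N,
    ∑ σ : Fin N,
      (r lam σ α β * r mu nu σ τ + r mu σ β τ * r nu lam σ α + r nu σ τ α * r lam mu σ β)
      = 0)

/-- The quadratic bracket `{f, g} = Σ r^{γε}_{αβ} x_γ x_ε (∂f/∂x_α)(∂g/∂x_β)` on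
`ℂ[x_0, …, x_{N-1}]` associated with a tensor `r`. -/
noncomputable def pBracket (N : ℕ) (r : Fin N → Fin N → Fin N → Fin N → ℂ)
    (f g : MvPolynomial (Fin N) ℂ) : MvPolynomial (Fin N) ℂ :=
  ∑ α : Fin N, ∑ β : Fin N, ∑ γ : Fin N, ∑ ε : Fin N,
    MvPolynomial.C (r γ ε α β) * MvPolynomial.X γ * MvPolynomial.X ε *
      MvPolynomial.pderiv α f * MvPolynomial.pderiv β g

section Aux

variable {N : ℕ}

/-! ### generalities -/

lemma aux_pderiv_comm (i j : Fin N) (f : MvPolynomial (Fin N) ℂ) :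
    pderiv i (pderiv j f) = pderiv j (pderiv i f) := by
  induction f using MvPolynomial.induction_on' with
  | monomial u a =>
    by_cases h : i = j
    · subst h; rfl
    · simp only [pderiv_monomial]
      rw [tsub_tsub, tsub_tsub, add_comm (Finsupp.single j 1)]
      congr 1
      rw [Finsupp.tsub_apply, Finsupp.tsub_apply,
        Finsupp.single_eq_of_ne fun hh => h hh.symm, Finsupp.single_eq_of_ne h,
        tsub_zero, tsub_zero]
      ring
  | add p q hp hq => simp [hp, hq]

lemma aux_swapA {M : Type*} [AddCommMonoid M] (F : Fin N → Fin N → Fin N → Fin N → M) :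
    (∑ a : Fin N, ∑ b : Fin N, ∑ c : Fin N, ∑ d : Fin N, F a b c d)
      = ∑ a : Fin N, ∑ b : Fin N, ∑ c : Fin N, ∑ d : Fin N, F b a c d :=
  Finset.sum_comm

lemma aux_swapB {M : Type*} [AddCommMonoid M] (F : Fin N → Fin N → Fin N → Fin N → M) :
    (∑ a : Fin N, ∑ b : Fin N, ∑ c : Fin N, ∑ d : Fin N, F a b c d)
      = ∑ a : Fin N, ∑ b : Fin N, ∑ c : Fin N, ∑ d : Fin N, F a c b d :=
  Finset.sum_congr rfl fun _ _ => Finset.sum_comm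

lemma aux_swapC {M : Type*} [AddCommMonoid M] (F : Fin N → Fin N → Fin N → Fin N → M) :
    (∑ a : Fin N, ∑ b : Fin N, ∑ c : Fin N, ∑ d : Fin N, F a b c d)
      = ∑ a : Fin N, ∑ b : Fin N, ∑ c : Fin N, ∑ d : Fin N, F a b d c :=
  Finset.sum_congr rfl fun _ _ => Finset.sum_congr rfl fun _ _ => Finset.sum_comm

lemma aux_perm4_4312 {M : Type*} [AddCommMonoid M] (F : Fin N → Fin N → Fin N → Fin N → M) :
    (∑ a : Fin N, ∑ b : Fin N, ∑ c : Fin N, ∑ d : Fin N, F a b c d) = ∑ a : Fin N, ∑ b : Fin N, ∑ c : Fin N, ∑ d : Fin N, F d c a b := by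
  calc ∑ a : Fin N, ∑ b : Fin N, ∑ c : Fin N, ∑ d : Fin N, F a b c d
    _ = ∑ a : Fin N, ∑ b : Fin N, ∑ c : Fin N, ∑ d : Fin N, F b a c d := aux_swapA (fun a b c d => F a b c d)
    _ = ∑ a : Fin N, ∑ b : Fin N, ∑ c : Fin N, ∑ d : Fin N, F c a b d := aux_swapB (fun a b c d => F b a c d)
    _ = ∑ a : Fin N, ∑ b : Fin N, ∑ c : Fin N, ∑ d : Fin N, F c b a d := aux_swapA (fun a b c d => F c a b d)
    _ = ∑ a : Fin N, ∑ b : Fin N, ∑ c : Fin N, ∑ d : Fin N, F d b a c := aux_swapC (fun a b c d => F c b a d)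
    _ = ∑ a : Fin N, ∑ b : Fin N, ∑ c : Fin N, ∑ d : Fin N, F d c a b := aux_swapB (fun a b c d => F d b a c)

lemma aux_perm4_2431 {M : Type*} [AddCommMonoid M] (F : Fin N → Fin N → Fin N → Fin N → M) :
    (∑ a : Fin N, ∑ b : Fin N, ∑ c : Fin N, ∑ d : Fin N, F a b c d) = ∑ a : Fin N, ∑ b : Fin N, ∑ c : Fin N, ∑ d : Fin N, F b d c a := by
  calc ∑ a : Fin N, ∑ b : Fin N, ∑ c : Fin N, ∑ d : Fin N, F a b c d
    _ = ∑ a : Fin N, ∑ b : Fin N, ∑ c : Fin N, ∑ d : Fin N, F a c b d := aux_swapB (fun a b c d => F a b c d)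
    _ = ∑ a : Fin N, ∑ b : Fin N, ∑ c : Fin N, ∑ d : Fin N, F a d b c := aux_swapC (fun a b c d => F a c b d)
    _ = ∑ a : Fin N, ∑ b : Fin N, ∑ c : Fin N, ∑ d : Fin N, F a d c b := aux_swapB (fun a b c d => F a d b c)
    _ = ∑ a : Fin N, ∑ b : Fin N, ∑ c : Fin N, ∑ d : Fin N, F b d c a := aux_swapA (fun a b c d => F a d c b)

lemma aux_perm4_3412 {M : Type*} [AddCommMonoid M] (F : Fin N → Fin N → Fin N → Fin N → M) :
    (∑ a : Fin N, ∑ b : Fin N, ∑ c : Fin N, ∑ d : Fin N, F a b c d) = ∑ a : Fin N, ∑ b : Fin N, ∑ c : Fin N, ∑ d : Fin N, F c d a b := by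
  calc ∑ a : Fin N, ∑ b : Fin N, ∑ c : Fin N, ∑ d : Fin N, F a b c d
    _ = ∑ a : Fin N, ∑ b : Fin N, ∑ c : Fin N, ∑ d : Fin N, F a c b d := aux_swapB (fun a b c d => F a b c d)
    _ = ∑ a : Fin N, ∑ b : Fin N, ∑ c : Fin N, ∑ d : Fin N, F b c a d := aux_swapA (fun a b c d => F a c b d)
    _ = ∑ a : Fin N, ∑ b : Fin N, ∑ c : Fin N, ∑ d : Fin N, F b d a c := aux_swapC (fun a b c d => F b c a d)
    _ = ∑ a : Fin N, ∑ b : Fin N, ∑ c : Fin N, ∑ d : Fin N, F c d a b := aux_swapB (fun a b c d => F b d a c)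

lemma aux_perm4_1423 {M : Type*} [AddCommMonoid M] (F : Fin N → Fin N → Fin N → Fin N → M) :
    (∑ a : Fin N, ∑ b : Fin N, ∑ c : Fin N, ∑ d : Fin N, F a b c d) = ∑ a : Fin N, ∑ b : Fin N, ∑ c : Fin N, ∑ d : Fin N, F a d b c := by
  calc ∑ a : Fin N, ∑ b : Fin N, ∑ c : Fin N, ∑ d : Fin N, F a b c d
    _ = ∑ a : Fin N, ∑ b : Fin N, ∑ c : Fin N, ∑ d : Fin N, F a c b d := aux_swapB (fun a b c d => F a b c d)
    _ = ∑ a : Fin N, ∑ b : Fin N, ∑ c : Fin N, ∑ d : Fin N, F a d b c := aux_swapC (fun a b c d => F a c b d)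


/-! ### the quadratic tensor `P` -/

noncomputable def auxP (r : Fin N → Fin N → Fin N → Fin N → ℂ) (α β : Fin N) :
    MvPolynomial (Fin N) ℂ :=
  ∑ γ : Fin N, ∑ ε : Fin N, C (r γ ε α β) * X γ * X ε

lemma aux_bracket_eq (r : Fin N → Fin N → Fin N → Fin N → ℂ) (f g : MvPolynomial (Fin N) ℂ) :
    pBracket N r f g
      = ∑ α : Fin N, ∑ β : Fin N, auxP r α β * pderiv α f * pderiv β g := by
  unfold pBracket auxP
  simp only [Finset.sum_mul]

lemma aux_P_skew (r : Fin N → Fin N → Fin N → Fin N → ℂ)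
    (hsk : ∀ γ ε α β : Fin N, r γ ε α β = - r ε γ β α) (α β : Fin N) :
    auxP r α β = - auxP r β α := by
  unfold auxP
  rw [Finset.sum_comm, ← Finset.sum_neg_distrib]
  refine Finset.sum_congr rfl fun u _ => ?_
  rw [← Finset.sum_neg_distrib]
  refine Finset.sum_congr rfl fun v _ => ?_
  rw [hsk v u α β]
  simp only [map_neg]
  ring

lemma aux_pderiv_P (r : Fin N → Fin N → Fin N → Fin N → ℂ) (s β τ : Fin N) :
    pderiv s (auxP r β τ) = ∑ ν : Fin N, C (r s ν β τ + r ν s β τ) * X ν := by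
  have hterm : ∀ γ ε : Fin N, pderiv s (C (r γ ε β τ) * X γ * X ε)
      = (if γ = s then C (r γ ε β τ) * X ε else 0)
        + (if ε = s then C (r γ ε β τ) * X γ else 0) := by
    intro γ ε
    rw [mul_assoc, pderiv_C_mul, pderiv_mul]
    rcases eq_or_ne γ s with h | h <;> rcases eq_or_ne ε s with h' | h' <;>
      simp [h, h', pderiv_X_of_ne] <;> ring
  calc pderiv s (auxP r β τ)
      = ∑ γ : Fin N, ∑ ε : Fin N, ((if γ = s then C (r γ ε β τ) * X ε else 0)
          + (if ε = s then C (r γ ε β τ) * X γ else 0)) := by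
        unfold auxP
        rw [map_sum]
        exact Finset.sum_congr rfl fun γ _ => by
          rw [map_sum]
          exact Finset.sum_congr rfl fun ε _ => hterm γ ε
    _ = (∑ γ : Fin N, ∑ ε : Fin N, if γ = s then C (r γ ε β τ) * X ε else 0)
        + (∑ γ : Fin N, ∑ ε : Fin N, if ε = s then C (r γ ε β τ) * X γ else 0) := by
        simp only [Finset.sum_add_distrib]
    _ = (∑ ε : Fin N, C (r s ε β τ) * X ε) + (∑ γ : Fin N, C (r γ s β τ) * X γ) := by
        congr 1
        · rw [Finset.sum_comm]
          exact Finset.sum_congr rfl fun ε _ => by simp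
        · exact Finset.sum_congr rfl fun γ _ => by simp
    _ = ∑ ν : Fin N, C (r s ν β τ + r ν s β τ) * X ν := by
        rw [← Finset.sum_add_distrib]
        exact Finset.sum_congr rfl fun ν _ => by rw [map_add]; ring

/-! ### the `FF` machinery for cubic expressions -/

noncomputable def auxFF (φ : Fin N → Fin N → Fin N → ℂ) : MvPolynomial (Fin N) ℂ :=
  ∑ l : Fin N, ∑ m : Fin N, ∑ n : Fin N, C (φ l m n) * X l * X m * X n

lemma auxFF_swapX (φ : Fin N → Fin N → Fin N → ℂ) :
    auxFF φ = auxFF fun l m n => φ m l n := by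
  unfold auxFF
  rw [Finset.sum_comm]
  exact Finset.sum_congr rfl fun l _ => Finset.sum_congr rfl fun m _ =>
    Finset.sum_congr rfl fun n _ => by ring

lemma auxFF_swapY (φ : Fin N → Fin N → Fin N → ℂ) :
    auxFF φ = auxFF fun l m n => φ l n m := by
  unfold auxFF
  refine Finset.sum_congr rfl fun l _ => ?_
  rw [Finset.sum_comm]
  exact Finset.sum_congr rfl fun m _ => Finset.sum_congr rfl fun n _ => by ring

lemma auxFF_sum (Φ : Fin N → Fin N → Fin N → Fin N → ℂ) :
    (∑ s : Fin N, auxFF fun l m n => Φ s l m n)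
      = auxFF fun l m n => ∑ s : Fin N, Φ s l m n := by
  unfold auxFF
  rw [Finset.sum_comm]
  refine Finset.sum_congr rfl fun l _ => ?_
  rw [Finset.sum_comm]
  refine Finset.sum_congr rfl fun m _ => ?_
  rw [Finset.sum_comm]
  refine Finset.sum_congr rfl fun n _ => ?_
  rw [← Finset.sum_mul, ← Finset.sum_mul, ← Finset.sum_mul, ← map_sum]

lemma auxFF_six (χ1 χ2 χ3 χ4 χ5 χ6 : Fin N → Fin N → Fin N → ℂ) :
    auxFF χ1 + auxFF χ2 + auxFF χ3 + auxFF χ4 + auxFF χ5 + auxFF χ6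
      = auxFF fun l m n =>
          χ1 l m n + χ2 l m n + χ3 l m n + χ4 l m n + χ5 l m n + χ6 l m n := by
  unfold auxFF
  simp only [← Finset.sum_add_distrib]
  exact Finset.sum_congr rfl fun l _ => Finset.sum_congr rfl fun m _ =>
    Finset.sum_congr rfl fun n _ => by simp only [map_add]; ring

lemma auxFF_zero : (auxFF fun _ _ _ => (0 : ℂ)) = (0 : MvPolynomial (Fin N) ℂ) := by
  unfold auxFF
  simp

/-! ### the core coefficient identity -/

lemma aux_coefId {N : ℕ} (r : Fin N → Fin N → Fin N → Fin N → ℂ)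
    (hsk : ∀ γ ε α β : Fin N, r γ ε α β = - r ε γ β α) (a b c l m n s : Fin N) :
    (r l m a s * (r s n b c + r n s b c) + r l m b s * (r s n c a + r n s c a) + r l m c s * (r s n a b + r n s a b)) +
      (r l n a s * (r s m b c + r m s b c) + r l n b s * (r s m c a + r m s c a) + r l n c s * (r s m a b + r m s a b)) +
      (r m l a s * (r s n b c + r n s b c) + r m l b s * (r s n c a + r n s c a) + r m l c s * (r s n a b + r n s a b)) +
      (r m n a s * (r s l b c + r l s b c) + r m n b s * (r s l c a + r l s c a) + r m n c s * (r s l a b + r l s a b)) +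
      (r n l a s * (r s m b c + r m s b c) + r n l b s * (r s m c a + r m s c a) + r n l c s * (r s m a b + r m s a b)) +
      (r n m a s * (r s l b c + r l s b c) + r n m b s * (r s l c a + r l s c a) + r n m c s * (r s l a b + r l s a b))
    =
    ((r l s a c * r m n s b + r m s c b * r n l s a + r n s b a * r l m s c) + (r l s a c * r n m s b + r n s c b * r m l s a + r m s b a * r l n s c) + (r m s a c * r l n s b + r l s c b * r n m s a + r n s b a * r m l s c) + (r m s a c * r n l s b + r n s c b * r l m s a + r l s b a * r m n s c) + (r n s a c * r l m s b + r l s c b * r m n s a + r m s b a * r n l s c) + (r n s a c * r m l s b + r m s c b * r l n s a + r l s b a * r n m s c))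
    -
    ((r l s a b * r m n s c + r m s b c * r n l s a + r n s c a * r l m s b) + (r l s a b * r n m s c + r n s b c * r m l s a + r m s c a * r l n s b) + (r m s a b * r l n s c + r l s b c * r n m s a + r n s c a * r m l s b) + (r m s a b * r n l s c + r n s b c * r l m s a + r l s c a * r m n s b) + (r n s a b * r l m s c + r l s b c * r m n s a + r m s c a * r n l s b) + (r n s a b * r m l s c + r m s b c * r l n s a + r l s c a * r n m s b)) := by
  linear_combination
      (r l m a s) * hsk s n b c +
      (r l m b s) * hsk s n c a +
      (r l m c s) * hsk s n a b +
      (-(r m s c b) * hsk n l s a) +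
      (r m s b c) * hsk n l s a +
      (r l n a s) * hsk s m b c +
      (r l n b s) * hsk s m c a +
      (r l n c s) * hsk s m a b +
      (-(r l s a c) * hsk n m s b) +
      (-(r n s c b) * hsk m l s a) +
      (r l s a b) * hsk n m s c +
      (r n s b c) * hsk m l s a +
      (r s n b c) * hsk m l a s +
      (r n s b c) * hsk m l a s +
      (r s n c a) * hsk m l b s +
      (r n s c a) * hsk m l b s +
      (r s n a b) * hsk m l c s +
      (r n s a b) * hsk m l c s +
      (-(r l s c b) * hsk n m s a) +
      (-(r n s b a) * hsk m l s c) +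
      (r l s b c) * hsk n m s a +
      (r n s c a) * hsk m l s b +
      (r m n a s) * hsk s l b c +
      (r m n b s) * hsk s l c a +
      (r m n c s) * hsk s l a b +
      (-(r m s a c) * hsk n l s b) +
      (r m s a b) * hsk n l s c +
      (r s m b c) * hsk n l a s +
      (r m s b c) * hsk n l a s +
      (r s m c a) * hsk n l b s +
      (r m s c a) * hsk n l b s +
      (r s m a b) * hsk n l c s +
      (r m s a b) * hsk n l c s +
      (-(r m s b a) * hsk n l s c) +
      (r m s c a) * hsk n l s b +
      (r s l b c) * hsk n m a s +
      (r l s b c) * hsk n m a s +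
      (r s l c a) * hsk n m b s +
      (r l s c a) * hsk n m b s +
      (r s l a b) * hsk n m c s +
      (r l s a b) * hsk n m c s +
      (-(r n s a c) * hsk m l s b) +
      (-(r l s b a) * hsk n m s c) +
      (r n s a b) * hsk m l s c +
      (r l s c a) * hsk n m s b +
      (-(r l m s a) * hsk s n b c) +
      (-(r l m s b) * hsk s n c a) +
      (-(r l m s c) * hsk s n a b) +
      (-(r l n s a) * hsk s m b c) +
      (-(r l n s b) * hsk s m c a) +
      (-(r l n s c) * hsk s m a b) +
      (-(r m n s a) * hsk s l b c) +
      (-(r m n s b) * hsk s l c a) +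
      (-(r m n s c) * hsk s l a b)


lemma aux_sumzero (r : Fin N → Fin N → Fin N → Fin N → ℂ)
    (hsk : ∀ γ ε α β : Fin N, r γ ε α β = - r ε γ β α)
    (hr2 : ∀ α β τ lam mu nu : Fin N,
      ∑ σ : Fin N,
        (r lam σ α β * r mu nu σ τ + r mu σ β τ * r nu lam σ α + r nu σ τ α * r lam mu σ β)
        = 0)
    (a b c l m n : Fin N) :
    ∑ s : Fin N,
      ((r l m a s * (r s n b c + r n s b c) + r l m b s * (r s n c a + r n s c a) + r l m c s * (r s n a b + r n s a b)) +
        (r l n a s * (r s m b c + r m s b c) + r l n b s * (r s m c a + r m s c a) + r l n c s * (r s m a b + r m s a b)) +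
        (r m l a s * (r s n b c + r n s b c) + r m l b s * (r s n c a + r n s c a) + r m l c s * (r s n a b + r n s a b)) +
        (r m n a s * (r s l b c + r l s b c) + r m n b s * (r s l c a + r l s c a) + r m n c s * (r s l a b + r l s a b)) +
        (r n l a s * (r s m b c + r m s b c) + r n l b s * (r s m c a + r m s c a) + r n l c s * (r s m a b + r m s a b)) +
        (r n m a s * (r s l b c + r l s b c) + r n m b s * (r s l c a + r l s c a) + r n m c s * (r s l a b + r l s a b)))
      = 0 := by
  have step : ∀ s : Fin N,
      ((r l m a s * (r s n b c + r n s b c) + r l m b s * (r s n c a + r n s c a) + r l m c s * (r s n a b + r n s a b)) +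
        (r l n a s * (r s m b c + r m s b c) + r l n b s * (r s m c a + r m s c a) + r l n c s * (r s m a b + r m s a b)) +
        (r m l a s * (r s n b c + r n s b c) + r m l b s * (r s n c a + r n s c a) + r m l c s * (r s n a b + r n s a b)) +
        (r m n a s * (r s l b c + r l s b c) + r m n b s * (r s l c a + r l s c a) + r m n c s * (r s l a b + r l s a b)) +
        (r n l a s * (r s m b c + r m s b c) + r n l b s * (r s m c a + r m s c a) + r n l c s * (r s m a b + r m s a b)) +
        (r n m a s * (r s l b c + r l s b c) + r n m b s * (r s l c a + r l s c a) + r n m c s * (r s l a b + r l s a b)))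
      = ((r l s a c * r m n s b + r m s c b * r n l s a + r n s b a * r l m s c) + (r l s a c * r n m s b + r n s c b * r m l s a + r m s b a * r l n s c) + (r m s a c * r l n s b + r l s c b * r n m s a + r n s b a * r m l s c) + (r m s a c * r n l s b + r n s c b * r l m s a + r l s b a * r m n s c) + (r n s a c * r l m s b + r l s c b * r m n s a + r m s b a * r n l s c) + (r n s a c * r m l s b + r m s c b * r l n s a + r l s b a * r n m s c))
        -
        ((r l s a b * r m n s c + r m s b c * r n l s a + r n s c a * r l m s b) + (r l s a b * r n m s c + r n s b c * r m l s a + r m s c a * r l n s b) + (r m s a b * r l n s c + r l s b c * r n m s a + r n s c a * r m l s b) + (r m s a b * r n l s c + r n s b c * r l m s a + r l s c a * r m n s b) + (r n s a b * r l m s c + r l s b c * r m n s a + r m s c a * r n l s b) + (r n s a b * r m l s c + r m s b c * r l n s a + r l s c a * r n m s b)) := fun s => aux_coefId r hsk a b c l m n s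
  rw [Finset.sum_congr rfl fun s _ => step s]
  have h1 := hr2 a c b l m n
  have h2 := hr2 a c b l n m
  have h3 := hr2 a c b m l n
  have h4 := hr2 a c b m n l
  have h5 := hr2 a c b n l m
  have h6 := hr2 a c b n m l
  have h7 := hr2 a b c l m n
  have h8 := hr2 a b c l n m
  have h9 := hr2 a b c m l n
  have h10 := hr2 a b c m n l
  have h11 := hr2 a b c n l m
  have h12 := hr2 a b c n m l
  simp only [Finset.sum_add_distrib] at h1 h2 h3 h4 h5 h6 h7 h8 h9 h10 h11 h12
  simp only [Finset.sum_sub_distrib, Finset.sum_add_distrib]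
  linear_combination h1 + h2 + h3 + h4 + h5 + h6 - h7 - h8 - h9 - h10 - h11 - h12

/-! ### the Poisson condition on `P` -/

lemma aux_PmulDP (r : Fin N → Fin N → Fin N → Fin N → ℂ) (a b c s : Fin N) :
    auxP r a s * pderiv s (auxP r b c)
      = auxFF fun l m n => r l m a s * (r s n b c + r n s b c) := by
  rw [aux_pderiv_P]
  unfold auxP auxFF
  rw [Finset.sum_mul]
  refine Finset.sum_congr rfl fun l _ => ?_
  rw [Finset.sum_mul]
  refine Finset.sum_congr rfl fun m _ => ?_
  rw [Finset.mul_sum]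
  refine Finset.sum_congr rfl fun n _ => ?_
  rw [map_mul]
  ring

lemma aux_triple (r : Fin N → Fin N → Fin N → Fin N → ℂ) (a b c s : Fin N) :
    auxP r a s * pderiv s (auxP r b c) + auxP r b s * pderiv s (auxP r c a)
        + auxP r c s * pderiv s (auxP r a b)
      = auxFF fun l m n => r l m a s * (r s n b c + r n s b c) + r l m b s * (r s n c a + r n s c a) + r l m c s * (r s n a b + r n s a b) := by
  rw [aux_PmulDP r a b c s, aux_PmulDP r b c a s, aux_PmulDP r c a b s]
  unfold auxFF
  simp only [← Finset.sum_add_distrib]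
  exact Finset.sum_congr rfl fun l _ => Finset.sum_congr rfl fun m _ =>
    Finset.sum_congr rfl fun n _ => by simp only [map_add]; ring

lemma aux_K (r : Fin N → Fin N → Fin N → Fin N → ℂ)
    (hsk : ∀ γ ε α β : Fin N, r γ ε α β = - r ε γ β α)
    (hr2 : ∀ α β τ lam mu nu : Fin N,
      ∑ σ : Fin N,
        (r lam σ α β * r mu nu σ τ + r mu σ β τ * r nu lam σ α + r nu σ τ α * r lam mu σ β)
        = 0)
    (a b c : Fin N) :
    ∑ s : Fin N,
        (auxP r a s * pderiv s (auxP r b c) + auxP r b s * pderiv s (auxP r c a)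
          + auxP r c s * pderiv s (auxP r a b))
      = 0 := by
  have hA : (∑ s : Fin N,
        (auxP r a s * pderiv s (auxP r b c) + auxP r b s * pderiv s (auxP r c a)
          + auxP r c s * pderiv s (auxP r a b)))
      = ∑ s : Fin N, auxFF (fun l m n => r l m a s * (r s n b c + r n s b c) + r l m b s * (r s n c a + r n s c a) + r l m c s * (r s n a b + r n s a b)) :=
    Finset.sum_congr rfl fun s _ => aux_triple r a b c s
  have hA2 : (∑ s : Fin N, auxFF (fun l m n => r l m a s * (r s n b c + r n s b c) + r l m b s * (r s n c a + r n s c a) + r l m c s * (r s n a b + r n s a b)))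
      = ∑ s : Fin N, auxFF (fun l m n => r l n a s * (r s m b c + r m s b c) + r l n b s * (r s m c a + r m s c a) + r l n c s * (r s m a b + r m s a b)) :=
    Finset.sum_congr rfl fun s _ => auxFF_swapY _
  have hA3 : (∑ s : Fin N, auxFF (fun l m n => r l m a s * (r s n b c + r n s b c) + r l m b s * (r s n c a + r n s c a) + r l m c s * (r s n a b + r n s a b)))
      = ∑ s : Fin N, auxFF (fun l m n => r m l a s * (r s n b c + r n s b c) + r m l b s * (r s n c a + r n s c a) + r m l c s * (r s n a b + r n s a b)) :=
    Finset.sum_congr rfl fun s _ => auxFF_swapX _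
  have hA4 : (∑ s : Fin N, auxFF (fun l m n => r l m a s * (r s n b c + r n s b c) + r l m b s * (r s n c a + r n s c a) + r l m c s * (r s n a b + r n s a b)))
      = ∑ s : Fin N, auxFF (fun l m n => r m n a s * (r s l b c + r l s b c) + r m n b s * (r s l c a + r l s c a) + r m n c s * (r s l a b + r l s a b)) :=
    Finset.sum_congr rfl fun s _ => ((auxFF_swapY _).trans (auxFF_swapX _))
  have hA5 : (∑ s : Fin N, auxFF (fun l m n => r l m a s * (r s n b c + r n s b c) + r l m b s * (r s n c a + r n s c a) + r l m c s * (r s n a b + r n s a b)))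
      = ∑ s : Fin N, auxFF (fun l m n => r n l a s * (r s m b c + r m s b c) + r n l b s * (r s m c a + r m s c a) + r n l c s * (r s m a b + r m s a b)) :=
    Finset.sum_congr rfl fun s _ => ((auxFF_swapX _).trans (auxFF_swapY _))
  have hA6 : (∑ s : Fin N, auxFF (fun l m n => r l m a s * (r s n b c + r n s b c) + r l m b s * (r s n c a + r n s c a) + r l m c s * (r s n a b + r n s a b)))
      = ∑ s : Fin N, auxFF (fun l m n => r n m a s * (r s l b c + r l s b c) + r n m b s * (r s l c a + r l s c a) + r n m c s * (r s l a b + r l s a b)) :=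
    Finset.sum_congr rfl fun s _ => (((auxFF_swapX _).trans (auxFF_swapY _)).trans (auxFF_swapX _))
  have h6 : (∑ s : Fin N, auxFF (fun l m n => r l m a s * (r s n b c + r n s b c) + r l m b s * (r s n c a + r n s c a) + r l m c s * (r s n a b + r n s a b)))
        + (∑ s : Fin N, auxFF (fun l m n => r l m a s * (r s n b c + r n s b c) + r l m b s * (r s n c a + r n s c a) + r l m c s * (r s n a b + r n s a b)))
        + (∑ s : Fin N, auxFF (fun l m n => r l m a s * (r s n b c + r n s b c) + r l m b s * (r s n c a + r n s c a) + r l m c s * (r s n a b + r n s a b)))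
        + (∑ s : Fin N, auxFF (fun l m n => r l m a s * (r s n b c + r n s b c) + r l m b s * (r s n c a + r n s c a) + r l m c s * (r s n a b + r n s a b)))
        + (∑ s : Fin N, auxFF (fun l m n => r l m a s * (r s n b c + r n s b c) + r l m b s * (r s n c a + r n s c a) + r l m c s * (r s n a b + r n s a b)))
        + (∑ s : Fin N, auxFF (fun l m n => r l m a s * (r s n b c + r n s b c) + r l m b s * (r s n c a + r n s c a) + r l m c s * (r s n a b + r n s a b))) = 0 := by
    calc (∑ s : Fin N, auxFF (fun l m n => r l m a s * (r s n b c + r n s b c) + r l m b s * (r s n c a + r n s c a) + r l m c s * (r s n a b + r n s a b)))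
        + (∑ s : Fin N, auxFF (fun l m n => r l m a s * (r s n b c + r n s b c) + r l m b s * (r s n c a + r n s c a) + r l m c s * (r s n a b + r n s a b)))
        + (∑ s : Fin N, auxFF (fun l m n => r l m a s * (r s n b c + r n s b c) + r l m b s * (r s n c a + r n s c a) + r l m c s * (r s n a b + r n s a b)))
        + (∑ s : Fin N, auxFF (fun l m n => r l m a s * (r s n b c + r n s b c) + r l m b s * (r s n c a + r n s c a) + r l m c s * (r s n a b + r n s a b)))
        + (∑ s : Fin N, auxFF (fun l m n => r l m a s * (r s n b c + r n s b c) + r l m b s * (r s n c a + r n s c a) + r l m c s * (r s n a b + r n s a b)))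
        + (∑ s : Fin N, auxFF (fun l m n => r l m a s * (r s n b c + r n s b c) + r l m b s * (r s n c a + r n s c a) + r l m c s * (r s n a b + r n s a b)))
        = (∑ s : Fin N, auxFF (fun l m n => r l m a s * (r s n b c + r n s b c) + r l m b s * (r s n c a + r n s c a) + r l m c s * (r s n a b + r n s a b))) +
          (∑ s : Fin N, auxFF (fun l m n => r l n a s * (r s m b c + r m s b c) + r l n b s * (r s m c a + r m s c a) + r l n c s * (r s m a b + r m s a b))) +
          (∑ s : Fin N, auxFF (fun l m n => r m l a s * (r s n b c + r n s b c) + r m l b s * (r s n c a + r n s c a) + r m l c s * (r s n a b + r n s a b))) +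
          (∑ s : Fin N, auxFF (fun l m n => r m n a s * (r s l b c + r l s b c) + r m n b s * (r s l c a + r l s c a) + r m n c s * (r s l a b + r l s a b))) +
          (∑ s : Fin N, auxFF (fun l m n => r n l a s * (r s m b c + r m s b c) + r n l b s * (r s m c a + r m s c a) + r n l c s * (r s m a b + r m s a b))) +
          (∑ s : Fin N, auxFF (fun l m n => r n m a s * (r s l b c + r l s b c) + r n m b s * (r s l c a + r l s c a) + r n m c s * (r s l a b + r l s a b))) := by
          rw [← hA2, ← hA3, ← hA4, ← hA5, ← hA6]
      _ = ∑ s : Fin N,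
            (auxFF (fun l m n => r l m a s * (r s n b c + r n s b c) + r l m b s * (r s n c a + r n s c a) + r l m c s * (r s n a b + r n s a b)) +
          auxFF (fun l m n => r l n a s * (r s m b c + r m s b c) + r l n b s * (r s m c a + r m s c a) + r l n c s * (r s m a b + r m s a b)) +
          auxFF (fun l m n => r m l a s * (r s n b c + r n s b c) + r m l b s * (r s n c a + r n s c a) + r m l c s * (r s n a b + r n s a b)) +
          auxFF (fun l m n => r m n a s * (r s l b c + r l s b c) + r m n b s * (r s l c a + r l s c a) + r m n c s * (r s l a b + r l s a b)) +
          auxFF (fun l m n => r n l a s * (r s m b c + r m s b c) + r n l b s * (r s m c a + r m s c a) + r n l c s * (r s m a b + r m s a b)) +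
          auxFF (fun l m n => r n m a s * (r s l b c + r l s b c) + r n m b s * (r s l c a + r l s c a) + r n m c s * (r s l a b + r l s a b))) := by
          simp only [← Finset.sum_add_distrib]
      _ = ∑ s : Fin N, auxFF (fun l m n =>
            (r l m a s * (r s n b c + r n s b c) + r l m b s * (r s n c a + r n s c a) + r l m c s * (r s n a b + r n s a b)) +
        (r l n a s * (r s m b c + r m s b c) + r l n b s * (r s m c a + r m s c a) + r l n c s * (r s m a b + r m s a b)) +
        (r m l a s * (r s n b c + r n s b c) + r m l b s * (r s n c a + r n s c a) + r m l c s * (r s n a b + r n s a b)) +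
        (r m n a s * (r s l b c + r l s b c) + r m n b s * (r s l c a + r l s c a) + r m n c s * (r s l a b + r l s a b)) +
        (r n l a s * (r s m b c + r m s b c) + r n l b s * (r s m c a + r m s c a) + r n l c s * (r s m a b + r m s a b)) +
        (r n m a s * (r s l b c + r l s b c) + r n m b s * (r s l c a + r l s c a) + r n m c s * (r s l a b + r l s a b))) :=
          Finset.sum_congr rfl fun s _ => auxFF_six _ _ _ _ _ _
      _ = auxFF (fun l m n => ∑ s : Fin N,
            ((r l m a s * (r s n b c + r n s b c) + r l m b s * (r s n c a + r n s c a) + r l m c s * (r s n a b + r n s a b)) +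
        (r l n a s * (r s m b c + r m s b c) + r l n b s * (r s m c a + r m s c a) + r l n c s * (r s m a b + r m s a b)) +
        (r m l a s * (r s n b c + r n s b c) + r m l b s * (r s n c a + r n s c a) + r m l c s * (r s n a b + r n s a b)) +
        (r m n a s * (r s l b c + r l s b c) + r m n b s * (r s l c a + r l s c a) + r m n c s * (r s l a b + r l s a b)) +
        (r n l a s * (r s m b c + r m s b c) + r n l b s * (r s m c a + r m s c a) + r n l c s * (r s m a b + r m s a b)) +
        (r n m a s * (r s l b c + r l s b c) + r n m b s * (r s l c a + r l s c a) + r n m c s * (r s l a b + r l s a b)))) := auxFF_sum _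
      _ = auxFF (fun _ _ _ => (0:ℂ)) := by
          congr 1
          funext l m n
          exact aux_sumzero r hsk hr2 a b c l m n
      _ = 0 := auxFF_zero
  set A := ∑ s : Fin N, auxFF (fun l m n => r l m a s * (r s n b c + r n s b c) + r l m b s * (r s n c a + r n s c a) + r l m c s * (r s n a b + r n s a b)) with hAdef
  rw [hA]
  have h6' : C (6:ℂ) * A = 0 := by
    have e : C (6:ℂ) * A = A + A + A + A + A + A := by
      rw [show ((6:ℂ)) = ((1:ℂ)+1+1+1+1+1) by norm_num]
      simp only [map_add, map_one]
      ring
    rw [e, h6]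
  have : A = C ((6:ℂ)⁻¹) * (C (6:ℂ) * A) := by
    rw [← mul_assoc, ← map_mul]
    norm_num
  rw [this, h6', mul_zero]

/-! ### the three pieces of the expansion -/

noncomputable def auxT1 (r : Fin N → Fin N → Fin N → Fin N → ℂ)
    (f g h : MvPolynomial (Fin N) ℂ) : MvPolynomial (Fin N) ℂ :=
  ∑ a : Fin N, ∑ s : Fin N, ∑ b : Fin N, ∑ c : Fin N,
    auxP r a s * pderiv a f * (pderiv s (auxP r b c) * pderiv b g * pderiv c h)

noncomputable def auxT2 (r : Fin N → Fin N → Fin N → Fin N → ℂ)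
    (f g h : MvPolynomial (Fin N) ℂ) : MvPolynomial (Fin N) ℂ :=
  ∑ a : Fin N, ∑ s : Fin N, ∑ b : Fin N, ∑ c : Fin N,
    auxP r a s * pderiv a f * (auxP r b c * pderiv s (pderiv b g) * pderiv c h)

noncomputable def auxT3 (r : Fin N → Fin N → Fin N → Fin N → ℂ)
    (f g h : MvPolynomial (Fin N) ℂ) : MvPolynomial (Fin N) ℂ :=
  ∑ a : Fin N, ∑ s : Fin N, ∑ b : Fin N, ∑ c : Fin N,
    auxP r a s * pderiv a f * (auxP r b c * pderiv b g * pderiv s (pderiv c h))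

lemma aux_expand (r : Fin N → Fin N → Fin N → Fin N → ℂ) (f g h : MvPolynomial (Fin N) ℂ) :
    pBracket N r f (pBracket N r g h) = auxT1 r f g h + auxT2 r f g h + auxT3 r f g h := by
  rw [aux_bracket_eq, aux_bracket_eq]
  unfold auxT1 auxT2 auxT3
  simp only [← Finset.sum_add_distrib]
  refine Finset.sum_congr rfl fun a _ => Finset.sum_congr rfl fun s _ => ?_
  rw [map_sum, Finset.mul_sum]
  refine Finset.sum_congr rfl fun b _ => ?_
  rw [map_sum, Finset.mul_sum]
  refine Finset.sum_congr rfl fun c _ => ?_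
  rw [pderiv_mul, pderiv_mul]
  ring

lemma aux_cancel (r : Fin N → Fin N → Fin N → Fin N → ℂ)
    (hsk : ∀ γ ε α β : Fin N, r γ ε α β = - r ε γ β α) (f g h : MvPolynomial (Fin N) ℂ) :
    auxT2 r f g h + auxT3 r h f g = 0 := by
  have e3 : auxT3 r h f g
      = ∑ a : Fin N, ∑ s : Fin N, ∑ b : Fin N, ∑ c : Fin N,
          auxP r c b * pderiv c h * (auxP r a s * pderiv a f * pderiv b (pderiv s g)) := by
    unfold auxT3
    exact aux_perm4_4312 _
  rw [e3]
  unfold auxT2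
  simp only [← Finset.sum_add_distrib]
  refine Finset.sum_eq_zero fun a _ => Finset.sum_eq_zero fun s _ =>
    Finset.sum_eq_zero fun b _ => Finset.sum_eq_zero fun c _ => ?_
  rw [aux_P_skew r hsk c b, aux_pderiv_comm b s g]
  ring

lemma aux_T1sum (r : Fin N → Fin N → Fin N → Fin N → ℂ)
    (hsk : ∀ γ ε α β : Fin N, r γ ε α β = - r ε γ β α)
    (hr2 : ∀ α β τ lam mu nu : Fin N,
      ∑ σ : Fin N,
        (r lam σ α β * r mu nu σ τ + r mu σ β τ * r nu lam σ α + r nu σ τ α * r lam mu σ β)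
        = 0)
    (f g h : MvPolynomial (Fin N) ℂ) :
    auxT1 r f g h + auxT1 r g h f + auxT1 r h f g = 0 := by
  have e1 : auxT1 r f g h
      = ∑ a : Fin N, ∑ b : Fin N, ∑ c : Fin N, ∑ d : Fin N,
          auxP r a d * pderiv a f * (pderiv d (auxP r b c) * pderiv b g * pderiv c h) := by
    unfold auxT1
    exact aux_perm4_1423 _
  have e2 : auxT1 r g h f
      = ∑ a : Fin N, ∑ b : Fin N, ∑ c : Fin N, ∑ d : Fin N,
          auxP r b d * pderiv b g * (pderiv d (auxP r c a) * pderiv c h * pderiv a f) := by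
    unfold auxT1
    exact aux_perm4_2431 _
  have e3 : auxT1 r h f g
      = ∑ a : Fin N, ∑ b : Fin N, ∑ c : Fin N, ∑ d : Fin N,
          auxP r c d * pderiv c h * (pderiv d (auxP r a b) * pderiv a f * pderiv b g) := by
    unfold auxT1
    exact aux_perm4_3412 _
  rw [e1, e2, e3]
  simp only [← Finset.sum_add_distrib]
  refine Finset.sum_eq_zero fun a _ => Finset.sum_eq_zero fun b _ =>
    Finset.sum_eq_zero fun c _ => ?_
  calc (∑ d : Fin N,
        (auxP r a d * pderiv a f * (pderiv d (auxP r b c) * pderiv b g * pderiv c h)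
          + auxP r b d * pderiv b g * (pderiv d (auxP r c a) * pderiv c h * pderiv a f)
          + auxP r c d * pderiv c h * (pderiv d (auxP r a b) * pderiv a f * pderiv b g)))
      = ∑ d : Fin N,
          ((auxP r a d * pderiv d (auxP r b c) + auxP r b d * pderiv d (auxP r c a)
              + auxP r c d * pderiv d (auxP r a b))
            * (pderiv a f * pderiv b g * pderiv c h)) :=
        Finset.sum_congr rfl fun d _ => by ring
    _ = (∑ d : Fin N,
          (auxP r a d * pderiv d (auxP r b c) + auxP r b d * pderiv d (auxP r c a)
            + auxP r c d * pderiv d (auxP r a b)))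
          * (pderiv a f * pderiv b g * pderiv c h) := (Finset.sum_mul _ _ _).symm
    _ = 0 := by rw [aux_K r hsk hr2 a b c, zero_mul]

/-! ### skew-symmetry and the bracket on generators -/

lemma aux_skew (r : Fin N → Fin N → Fin N → Fin N → ℂ)
    (hsk : ∀ γ ε α β : Fin N, r γ ε α β = - r ε γ β α) (f g : MvPolynomial (Fin N) ℂ) :
    pBracket N r f g = - pBracket N r g f := by
  rw [aux_bracket_eq, aux_bracket_eq, Finset.sum_comm, ← Finset.sum_neg_distrib]
  refine Finset.sum_congr rfl fun u _ => ?_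
  rw [← Finset.sum_neg_distrib]
  refine Finset.sum_congr rfl fun v _ => ?_
  rw [aux_P_skew r hsk v u]
  ring

lemma aux_part3 (r : Fin N → Fin N → Fin N → Fin N → ℂ) (α β : Fin N) :
    pBracket N r (X α) (X β)
      = ∑ γ : Fin N, ∑ ε : Fin N, C (r γ ε α β) * X γ * X ε := by
  rw [aux_bracket_eq]
  have : ∀ a b : Fin N, auxP r a b * pderiv a (X α : MvPolynomial (Fin N) ℂ) * pderiv b (X β)
      = (if α = a then 1 else 0) * (if β = b then 1 else 0) * auxP r a b := by
    intro a b
    rcases eq_or_ne α a with h | h <;> rcases eq_or_ne β b with h' | h' <;>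
      simp [h, h', pderiv_X_of_ne] <;> try ring
  rw [Finset.sum_congr rfl fun a _ => Finset.sum_congr rfl fun b _ => this a b]
  simp [Finset.sum_ite_eq, ← Finset.sum_mul, ite_mul]
  unfold auxP
  rfl

end Aux

/-- For a skew-symmetric solution `r` of the associative Yang–Baxter equation, the bracket
`{f, g} = Σ r^{γε}_{αβ} x_γ x_ε (∂f/∂x_α)(∂g/∂x_β)` is skew-symmetric, satisfies the Jacobi
identity, and satisfies `{x_α, x_β} = Σ r^{γε}_{αβ} x_γ x_ε` (a quadratic Poisson bracket). -/
theorem pBracket_is_Poisson (N : ℕ) (hN : 0 < N)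
    (r : Fin N → Fin N → Fin N → Fin N → ℂ) (hr : IsAYBESolution N r) :
    (∀ f g : MvPolynomial (Fin N) ℂ, pBracket N r f g = - pBracket N r g f) ∧
    (∀ f g h : MvPolynomial (Fin N) ℂ,
      pBracket N r f (pBracket N r g h) + pBracket N r g (pBracket N r h f) +
        pBracket N r h (pBracket N r f g) = 0) ∧
    (∀ α β : Fin N,
      pBracket N r (MvPolynomial.X α) (MvPolynomial.X β) =
        ∑ γ : Fin N, ∑ ε : Fin N,
          MvPolynomial.C (r γ ε α β) * MvPolynomial.X γ * MvPolynomial.X ε) := by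
  obtain ⟨hsk, hr2⟩ := hr
  refine ⟨fun f g => aux_skew r hsk f g, fun f g h => ?_, fun α β => aux_part3 r α β⟩
  rw [aux_expand r f g h, aux_expand r g h f, aux_expand r h f g]
  have c1 := aux_cancel r hsk f g h
  have c2 := aux_cancel r hsk g h f
  have c3 := aux_cancel r hsk h f g
  have t1 := aux_T1sum r hsk hr2 f g h
  linear_combination t1 + c1 + c2 + c3
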